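/- (Corollary 2) Let u be a potential game with potential function φ, and suppose the normalized version ū of u (defined by ū_i(x) = u_i(x) − (1/|A_i|) · Σ_{a ∈ A_i} u_i(a, x_{-i})) is graphical on a simple graph H on V (regarded as a symmetric irreflexive relation). Then φ decomposes as a sum of local potentials over the maximal cliques of H: there exists, for each maximal clique C of H, a function φ^C : (Π j, A j) → ℝ depending only on the coordinates in C, such that φ(x) = Σ_{C maximal clique of H} φ^C(x) for every strategy profile x. -/

import Mathlib

/-- A game `u` is *graphical* on the (directed) graph with edge relation `E`. -/
def Graphical {V : Type*} (A : V → Type*) (u : ∀ i : V, (∀ j, A j) → ℝ)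
    (E : V → V → Prop) : Prop :=
  ∀ i : V, ∀ x y : ∀ j, A j, x i = y i → (∀ j, E i j → x j = y j) → u i x = u i y

/-- A function of strategy profiles *depends only on* the coordinates in `C`. -/
def ProfileDependsOn {V : Type*} (A : V → Type*) (f : (∀ j, A j) → ℝ) (C : Set V) : Prop :=
  ∀ x y : ∀ j, A j, (∀ j ∈ C, x j = y j) → f x = f y

/-- `φ` is an (exact) *potential* for the game `u`. -/
def IsPotential {V : Type*} (A : V → Type*) (u : ∀ i : V, (∀ j, A j) → ℝ)
    (φ : (∀ j, A j) → ℝ) : Prop :=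
  ∀ i : V, ∀ x y : ∀ j, A j, (∀ j, j ≠ i → x j = y j) → u i x - u i y = φ x - φ y

/-- The *normalized version* `ū` of a game `u`:
`ū_i(x) = u_i(x) − (1/|A_i|) · Σ_{a ∈ A_i} u_i(a, x_{-i})`. -/
noncomputable def normalizeGame {V : Type*} [DecidableEq V] (A : V → Type*)
    [∀ i, Fintype (A i)] (u : ∀ i : V, (∀ j, A j) → ℝ) :
    ∀ i : V, (∀ j, A j) → ℝ :=
  fun i x => u i x -
    (1 / (Fintype.card (A i) : ℝ)) * ∑ a : A i, u i (Function.update x i a)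

/-- `C` is a *maximal clique* of the simple graph `H`. -/
def MaximalClique {V : Type*} (H : SimpleGraph V) (C : Finset V) : Prop :=
  H.IsClique (C : Set V) ∧ ∀ D : Finset V, H.IsClique (D : Set V) → C ⊆ D → D = C

open Finset

section Helpers

variable {V : Type*} [DecidableEq V] {A : V → Type*}

/-- Patch: equal to `x` on `T`, to `z` off `T`. -/
noncomputable def patchP (z x : ∀ j, A j) (T : Finset V) : ∀ j, A j :=
  fun j => open scoped Classical in if j ∈ T then x j else z j

lemma patchP_congr {z x y : ∀ j, A j} {S : Set V} {T : Finset V}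
    (h : ∀ j ∈ S, x j = y j) (hT : ↑T ⊆ S) : patchP z x T = patchP z y T := by
  funext j
  unfold patchP
  split_ifs with hj
  · exact h j (hT hj)
  · rfl

/-- Möbius term. -/
noncomputable def phiSP (φ : (∀ j, A j) → ℝ) (z : ∀ j, A j) (S : Finset V)
    (x : ∀ j, A j) : ℝ :=
  ∑ T ∈ S.powerset, (-1 : ℝ) ^ (S \ T).card * φ (patchP z x T)

lemma phiSP_dependsOn (φ : (∀ j, A j) → ℝ) (z : ∀ j, A j) (S : Finset V) :
    ProfileDependsOn A (phiSP φ z S) (↑S : Set V) := by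
  intro x y h
  unfold phiSP
  refine Finset.sum_congr rfl fun T hT => ?_
  rw [patchP_congr h (by exact_mod_cast Finset.mem_powerset.mp hT)]

lemma phiSP_mobius [Fintype V] (φ : (∀ j, A j) → ℝ) (z x : ∀ j, A j) :
    ∑ S : Finset V, phiSP φ z S x = φ x := by
  classical
  unfold phiSP
  rw [Finset.sum_comm' (s := Finset.univ) (t := fun S => S.powerset)
    (t' := Finset.univ) (s' := fun T => Finset.univ.filter fun S => T ⊆ S)
    (f := fun S T => (-1 : ℝ) ^ (S \ T).card * φ (patchP z x T))
    (by intro S T; simp [Finset.mem_powerset])]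
  have key : ∀ T : Finset V,
      ∑ S ∈ Finset.univ.filter (fun S => T ⊆ S), (-1 : ℝ) ^ (S \ T).card
        = if T = Finset.univ then 1 else 0 := by
    intro T
    have hbij : ∑ S ∈ Finset.univ.filter (fun S => T ⊆ S), (-1 : ℝ) ^ (S \ T).card
        = ∑ R ∈ Tᶜ.powerset, (-1 : ℝ) ^ R.card := by
      refine Finset.sum_bij' (fun S _ => S \ T) (fun R _ => T ∪ R) ?_ ?_ ?_ ?_ ?_
      · intro S hS
        simp only [Finset.mem_filter, Finset.mem_univ, true_and] at hS
        simp only [Finset.mem_powerset]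
        intro a ha
        simp only [Finset.mem_sdiff] at ha
        simp [ha.2]
      · intro R hR
        simp [Finset.subset_union_left]
      · intro S hS
        simp only [Finset.mem_filter, Finset.mem_univ, true_and] at hS
        show T ∪ S \ T = S
        rw [Finset.union_sdiff_of_subset hS]
      · intro R hR
        simp only [Finset.mem_powerset] at hR
        show (T ∪ R) \ T = R
        rw [Finset.union_sdiff_cancel_left]
        rw [Finset.disjoint_left]
        intro a haT haR
        exact (Finset.mem_compl.mp (hR haR)) haT
      · intro S hS; rfl
    rw [hbij]
    have := Finset.sum_powerset_neg_one_pow_card (x := Tᶜ)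
    have h2 : (∑ m ∈ Tᶜ.powerset, (-1 : ℝ) ^ m.card)
        = ((∑ m ∈ Tᶜ.powerset, (-1 : ℤ) ^ m.card : ℤ) : ℝ) := by push_cast; rfl
    rw [h2, this]
    by_cases h : Tᶜ = ∅
    · have hT : T = Finset.univ := by
        rwa [Finset.compl_eq_empty_iff] at h
      simp [h, hT]
    · have : T ≠ Finset.univ := fun ht => h (by simp [ht])
      simp [h, this]
  calc ∑ T : Finset V, ∑ S ∈ Finset.univ.filter (fun S => T ⊆ S),
        (-1 : ℝ) ^ (S \ T).card * φ (patchP z x T)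
      = ∑ T : Finset V, (if T = Finset.univ then 1 else 0) * φ (patchP z x T) := by
        refine Finset.sum_congr rfl fun T _ => ?_
        rw [← Finset.sum_mul, key T]
    _ = φ (patchP z x Finset.univ) := by
        simp [ite_mul]
    _ = φ x := by
        congr 1; funext j; simp [patchP]

end Helpers

section Part2

variable {V : Type*} [DecidableEq V] {A : V → Type*} [∀ i, Fintype (A i)]

open Finset

lemma diff_lemma (u : ∀ i : V, (∀ j, A j) → ℝ) (φ : (∀ j, A j) → ℝ)
    {H : SimpleGraph V} (hpot : IsPotential A u φ)
    (hg : Graphical A (normalizeGame A u) H.Adj) (z : ∀ j, A j) (i : V)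
    (y y' : ∀ j, A j) (h0 : y i = y' i) (h1 : ∀ k, H.Adj i k → y k = y' k) :
    φ y - φ (Function.update y i (z i)) = φ y' - φ (Function.update y' i (z i)) := by
  have key : ∀ w : ∀ j, A j, φ w - φ (Function.update w i (z i)) =
      normalizeGame A u i w - normalizeGame A u i (Function.update w i (z i)) := by
    intro w
    have hpw := hpot i w (Function.update w i (z i))
      (fun j hj => (Function.update_of_ne hj _ _).symm)
    have hsum : ∑ a : A i, u i (Function.update w i a)
        = ∑ a : A i, u i (Function.update (Function.update w i (z i)) i a) := by
      refine Finset.sum_congr rfl fun a _ => ?_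
      rw [Function.update_idem]
    unfold normalizeGame
    rw [← hpw, hsum]
    ring
  rw [key y, key y']
  have e1 : normalizeGame A u i y = normalizeGame A u i y' := hg i y y' h0 h1
  have e2 : normalizeGame A u i (Function.update y i (z i))
      = normalizeGame A u i (Function.update y' i (z i)) := by
    refine hg i _ _ (by simp) fun k hk => ?_
    have hki : k ≠ i := (H.ne_of_adj hk).symm
    rw [Function.update_of_ne hki, Function.update_of_ne hki]
    exact h1 k hk
  rw [e1, e2]

lemma patchP_insert_eq_update (z x : ∀ j, A j) {T : Finset V} {i : V} (hi : i ∉ T) :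
    patchP z x T = Function.update (patchP z x (insert i T)) i (z i) := by
  funext k
  by_cases hk : k = i
  · subst hk
    simp [patchP, hi]
  · rw [Function.update_of_ne hk]
    simp [patchP, Finset.mem_insert, hk]

lemma phiSP_eq_zero (u : ∀ i : V, (∀ j, A j) → ℝ) (φ : (∀ j, A j) → ℝ)
    {H : SimpleGraph V} (hpot : IsPotential A u φ)
    (hg : Graphical A (normalizeGame A u) H.Adj) (z : ∀ j, A j)
    {S : Finset V} {i j : V} (hi : i ∈ S) (hj : j ∈ S) (hij : i ≠ j)
    (hadj : ¬ H.Adj i j) (x : ∀ j, A j) : phiSP φ z S x = 0 := by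
  classical
  set S' := S.erase i with hS'
  have hiS' : i ∉ S' := Finset.notMem_erase i S
  have hSins : S = insert i S' := (Finset.insert_erase hi).symm
  -- step 1: collapse over i
  have step1 : phiSP φ z S x = ∑ T ∈ S'.powerset, (-1 : ℝ) ^ (S' \ T).card *
      (φ (patchP z x (insert i T)) - φ (Function.update (patchP z x (insert i T)) i (z i))) := by
    unfold phiSP
    rw [hSins, Finset.sum_powerset_insert hiS']
    rw [← Finset.sum_add_distrib]
    refine Finset.sum_congr rfl fun T hT => ?_
    rw [Finset.mem_powerset] at hT
    have hiT : i ∉ T := fun h => hiS' (hT h)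
    have c1 : (insert i S') \ T = insert i (S' \ T) := by
      rw [Finset.insert_sdiff_of_notMem _ hiT]
    have c2 : (insert i S') \ (insert i T) = S' \ T := by
      ext a
      simp only [Finset.mem_sdiff, Finset.mem_insert]
      constructor
      · rintro ⟨ha | ha, hna⟩
        · exact absurd (Or.inl ha) hna
        · exact ⟨ha, fun h => hna (Or.inr h)⟩
      · rintro ⟨ha, hna⟩
        exact ⟨Or.inr ha, fun h => h.elim (fun h => hiS' (h ▸ ha)) hna⟩
    have c1card : ((insert i S') \ T).card = (S' \ T).card + 1 := by
      rw [c1, Finset.card_insert_of_notMem (fun h => hiS' (Finset.mem_sdiff.mp h).1)]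
    rw [c2, c1card, patchP_insert_eq_update z x hiT]
    ring
  rw [step1]
  -- step 2: pair over j
  have hjS' : j ∈ S' := Finset.mem_erase.mpr ⟨hij.symm, hj⟩
  set S'' := S'.erase j with hS''
  have hjS'' : j ∉ S'' := Finset.notMem_erase j S'
  have hS'ins : S' = insert j S'' := (Finset.insert_erase hjS').symm
  rw [hS'ins, Finset.sum_powerset_insert hjS'', ← Finset.sum_add_distrib]
  refine Finset.sum_eq_zero fun T hT => ?_
  rw [Finset.mem_powerset] at hT
  have hjT : j ∉ T := fun h => hjS'' (hT h)
  have c2 : (insert j S'') \ (insert j T) = S'' \ T := by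
    ext a
    simp only [Finset.mem_sdiff, Finset.mem_insert]
    constructor
    · rintro ⟨ha | ha, hna⟩
      · exact absurd (Or.inl ha) hna
      · exact ⟨ha, fun h => hna (Or.inr h)⟩
    · rintro ⟨ha, hna⟩
      exact ⟨Or.inr ha, fun h => h.elim (fun h => hjS'' (h ▸ ha)) hna⟩
  have c1card : ((insert j S'') \ T).card = (S'' \ T).card + 1 := by
    rw [Finset.insert_sdiff_of_notMem _ hjT,
      Finset.card_insert_of_notMem (fun h => hjS'' (Finset.mem_sdiff.mp h).1)]
  have hval : φ (patchP z x (insert i T)) -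
        φ (Function.update (patchP z x (insert i T)) i (z i))
      = φ (patchP z x (insert i (insert j T))) -
        φ (Function.update (patchP z x (insert i (insert j T))) i (z i)) := by
    refine diff_lemma u φ hpot hg z i _ _ ?_ ?_
    · simp [patchP]
    · intro k hk
      have hkj : k ≠ j := fun h => hadj (h ▸ hk)
      simp only [patchP, Finset.mem_insert]
      have : (k = i ∨ k ∈ T) ↔ (k = i ∨ k = j ∨ k ∈ T) := by
        constructor
        · rintro (h | h); exacts [Or.inl h, Or.inr (Or.inr h)]
        · rintro (h | h | h); exacts [Or.inl h, absurd h hkj, Or.inr h]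
      by_cases hc : k = i ∨ k ∈ T
      · rw [if_pos hc, if_pos (this.mp hc)]
      · rw [if_neg hc, if_neg (fun h => hc (this.mpr h))]
  rw [c2, c1card, hval]
  ring

lemma exists_maximalClique {V : Type*} [Fintype V] [DecidableEq V] (H : SimpleGraph V)
    (S : Finset V) (hS : H.IsClique (S : Set V)) :
    ∃ C : Finset V, MaximalClique H C ∧ S ⊆ C := by
  classical
  set t := Finset.univ.filter (fun C : Finset V => H.IsClique (C : Set V) ∧ S ⊆ C) with ht
  have hne : t.Nonempty := ⟨S, by simp [ht, hS]⟩
  obtain ⟨C, hC, hmax⟩ := Finset.exists_max_image t Finset.card hne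
  simp only [ht, Finset.mem_filter, Finset.mem_univ, true_and] at hC
  refine ⟨C, ⟨hC.1, fun D hD hCD => ?_⟩, hC.2⟩
  have hDt : D ∈ t := by
    simp only [ht, Finset.mem_filter, Finset.mem_univ, true_and]
    exact ⟨hD, hC.2.trans hCD⟩
  exact (Finset.eq_of_subset_of_card_le hCD (hmax D hDt)).symm

end Part2

open scoped Classical in
/-- Corollary 2: if `u` is a potential game with potential `φ` whose normalized
version is graphical on the simple graph `H`, then `φ` decomposes as a sum of local
potentials over the maximal cliques of `H`. -/
theorem potential_clique_decomposition {V : Type*} [Fintype V] [DecidableEq V]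
    {A : V → Type*} [∀ i, Fintype (A i)] [∀ i, Nonempty (A i)]
    (u : ∀ i : V, (∀ j, A j) → ℝ) (φ : (∀ j, A j) → ℝ) (H : SimpleGraph V)
    (hpot : IsPotential A u φ)
    (hg : Graphical A (normalizeGame A u) H.Adj) :
    ∃ φC : Finset V → (∀ j, A j) → ℝ,
      (∀ C : Finset V, MaximalClique H C → ProfileDependsOn A (φC C) (C : Set V)) ∧
      ∀ x : ∀ j, A j,
        φ x = ∑ C ∈ Finset.univ.filter (fun C : Finset V => MaximalClique H C), φC C x := by
  classical
  have z : ∀ j, A j := fun j => Classical.arbitrary (A j)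
  have hext : ∀ S : Finset V, ∃ C : Finset V, MaximalClique H C ∧
      (H.IsClique (S : Set V) → S ⊆ C) := by
    intro S
    by_cases h : H.IsClique (S : Set V)
    · obtain ⟨C, h1, h2⟩ := exists_maximalClique H S h
      exact ⟨C, h1, fun _ => h2⟩
    · obtain ⟨C, h1, _⟩ := exists_maximalClique H ∅ (by simp)
      exact ⟨C, h1, fun hc => absurd hc h⟩
  choose pick hpickmax hpicksub using hext
  refine ⟨fun C x => ∑ S ∈ Finset.univ.filter (fun S => pick S = C), phiSP φ z S x,
    ?_, ?_⟩
  · intro C hC x y hxy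
    refine Finset.sum_congr rfl fun S hS => ?_
    simp only [Finset.mem_filter, Finset.mem_univ, true_and] at hS
    by_cases hcl : H.IsClique (S : Set V)
    · have hSC : S ⊆ C := hS ▸ hpicksub S hcl
      exact phiSP_dependsOn φ z S x y fun k hk => hxy k (hSC hk)
    · -- S is not a clique: phiSP vanishes
      have : ∃ i ∈ S, ∃ j ∈ S, i ≠ j ∧ ¬ H.Adj i j := by
        by_contra hcon
        push_neg at hcon
        apply hcl
        intro a ha b hb hab
        exact hcon a ha b hb hab
      obtain ⟨i, hi, j, hj, hij, hadj⟩ := this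
      rw [phiSP_eq_zero u φ hpot hg z hi hj hij hadj x,
        phiSP_eq_zero u φ hpot hg z hi hj hij hadj y]
  · intro x
    rw [← phiSP_mobius φ z x]
    exact (Finset.sum_fiberwise_of_maps_to
      (fun S _ => Finset.mem_filter.mpr ⟨Finset.mem_univ _, hpickmax S⟩)
      (fun S => phiSP φ z S x)).symm
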